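/- arXiv:0912.4130 — 4 statements merged into one kernel-verified Lean document; each statement's English description precedes it below -/
import Mathlib

section
/- Let X be a compact metric space and φ : X → X a continuous locally injective surjection. Let z ∈ X with φ^{-1}(z) = {w_1,…,w_j}. Then there exist an open neighborhood U of z and pairwise disjoint open sets V_1,…,V_j with w_i ∈ V_i, such that φ^{-1}(closure U) ⊆ V_1 ∪ … ∪ V_j, the closures of the V_i are pairwise disjoint, and φ is injective on the closure of each V_i. -/
/-- Lemma 3.6 of [Th]: separating neighborhoods of the fiber of a locally injective map. -/
theorem exists_separating_neighborhoods {X : Type*} [MetricSpace X] [CompactSpace X]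
    (φ : X → X) (hcont : Continuous φ) (hsurj : Function.Surjective φ)
    (hlocinj : ∀ x : X, ∃ U ∈ nhds x, Set.InjOn φ U)
    (z : X) (j : ℕ) (w : Fin j → X) (hw : Function.Injective w)
    (hfiber : φ ⁻¹' {z} = Set.range w) :
    ∃ (U : Set X) (V : Fin j → Set X),
      IsOpen U ∧ z ∈ U ∧
      (∀ i, IsOpen (V i) ∧ w i ∈ V i) ∧
      (φ ⁻¹' (closure U) ⊆ ⋃ i, V i) ∧
      (Pairwise fun i i' => Disjoint (closure (V i)) (closure (V i'))) ∧
      (∀ i, Set.InjOn φ (closure (V i))) := by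
  -- choose injectivity neighborhoods with radii ε i
  have hε : ∀ i : Fin j, ∃ ε > 0, Set.InjOn φ (Metric.ball (w i) ε) := by
    intro i
    obtain ⟨W, hW, hinj⟩ := hlocinj (w i)
    obtain ⟨ε, hε, hball⟩ := Metric.mem_nhds_iff.mp hW
    exact ⟨ε, hε, hinj.mono hball⟩
  choose ε hεpos hεinj using hε
  -- a uniform lower bound δ on distances between distinct w i
  have hδ : ∃ δ > 0, ∀ i i' : Fin j, i ≠ i' → δ ≤ dist (w i) (w i') := by
    set S : Finset ℝ := insert 1 ((Finset.univ : Finset (Fin j × Fin j)).image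
      fun p => if p.1 = p.2 then 1 else dist (w p.1) (w p.2)) with hS
    have hSne : S.Nonempty := ⟨1, Finset.mem_insert_self _ _⟩
    refine ⟨S.min' hSne, ?_, ?_⟩
    · apply lt_of_lt_of_le _ (le_refl (S.min' hSne))
      rcases Finset.mem_insert.mp (S.min'_mem hSne) with h | h
      · simp [h]
      · obtain ⟨p, -, hp⟩ := Finset.mem_image.mp h
        rw [← hp]
        split_ifs with h'
        · norm_num
        · exact dist_pos.mpr fun he => h' (hw he)
    · intro i i' hne
      have : dist (w i) (w i') ∈ S := by
        apply Finset.mem_insert_of_mem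
        exact Finset.mem_image.mpr ⟨(i, i'), Finset.mem_univ _, by simp [hne]⟩
      exact S.min'_le _ this
  obtain ⟨δ, hδpos, hδle⟩ := hδ
  set r : Fin j → ℝ := fun i => min (ε i / 2) (δ / 3) with hr
  have hrpos : ∀ i, 0 < r i := fun i => lt_min (by linarith [hεpos i]) (by linarith)
  set V : Fin j → Set X := fun i => Metric.ball (w i) (r i) with hV
  have hclos : ∀ i, closure (V i) ⊆ Metric.closedBall (w i) (r i) := fun i =>
    Metric.closure_ball_subset_closedBall
  have hVinj : ∀ i, Set.InjOn φ (closure (V i)) := by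
    intro i
    refine (hεinj i).mono ((hclos i).trans ?_)
    intro x hx
    have : r i < ε i := lt_of_le_of_lt (min_le_left _ _) (by linarith [hεpos i])
    exact Metric.mem_ball.mpr (lt_of_le_of_lt (Metric.mem_closedBall.mp hx) this)
  have hVdisj : Pairwise fun i i' => Disjoint (closure (V i)) (closure (V i')) := by
    intro i i' hne
    rw [Set.disjoint_left]
    intro x hx hx'
    have h1 := Metric.mem_closedBall.mp (hclos i hx)
    have h2 := Metric.mem_closedBall.mp (hclos i' hx')
    have hle := hδle i i' hne
    have : dist (w i) (w i') ≤ r i + r i' :=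
      (dist_triangle _ x _).trans (by rw [dist_comm (w i) x]; linarith)
    have hri : r i ≤ δ / 3 := min_le_right _ _
    have hri' : r i' ≤ δ / 3 := min_le_right _ _
    linarith
  -- the complement K
  set K : Set X := (⋃ i, V i)ᶜ with hK
  have hKcl : IsClosed K := (isOpen_iUnion fun i => Metric.isOpen_ball).isClosed_compl
  have hKz : z ∉ φ '' K := by
    rintro ⟨x, hxK, hx⟩
    have : x ∈ Set.range w := hfiber ▸ (by simpa using hx : x ∈ φ ⁻¹' {z})
    obtain ⟨i, rfl⟩ := this
    exact hxK (Set.mem_iUnion.mpr ⟨i, Metric.mem_ball_self (hrpos i)⟩)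
  have himg : IsClosed (φ '' K) := (hKcl.isCompact.image hcont).isClosed
  obtain ⟨ρ, hρpos, hρ⟩ := Metric.mem_nhds_iff.mp (himg.isOpen_compl.mem_nhds hKz)
  refine ⟨Metric.ball z (ρ / 2), V, Metric.isOpen_ball, Metric.mem_ball_self (by linarith),
    fun i => ⟨Metric.isOpen_ball, Metric.mem_ball_self (hrpos i)⟩, ?_, hVdisj, hVinj⟩
  intro x hx
  by_contra hxV
  have hxK : x ∈ K := hxV
  have hφx : φ x ∈ Metric.closedBall z (ρ / 2) :=
    (Metric.closure_ball_subset_closedBall) hx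
  have : φ x ∈ Metric.ball z ρ :=
    Metric.mem_ball.mpr (lt_of_le_of_lt (Metric.mem_closedBall.mp hφx) (by linarith))
  exact hρ this ⟨x, hxK, rfl⟩
end

section
/- Let X be a compact metric space, φ : X → X continuous surjective and locally injective with finite fibers, and F : X → ℝ a continuous function with A_F = lim_k (1/k) inf_x ∑_{j<k} F(φ^j x) > 0. Then for any t ≥ 0 the operator L_{-tF} on C(X) defined by L_{-tF}(g)(x) = ∑_{y ∈ φ^{-1}(x)} e^{-tF(y)} g(y) satisfies lim_{t→∞} ρ(L_{-tF}) = 0, where ρ denotes spectral radius. -/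
open Filter

/-- If the asymptotic minimal Birkhoff average `A_F` of `F` is strictly positive, then the
spectral radius of the transfer operator `L_{-tF}` tends to `0` as `t → ∞`. -/
theorem spectralRadius_transfer_tendsto_zero {X : Type*} [MetricSpace X] [CompactSpace X]
    [Nonempty X] (φ : X → X) (hcont : Continuous φ) (hsurj : Function.Surjective φ)
    (hlocinj : ∀ x : X, ∃ U ∈ nhds x, Set.InjOn φ U)
    (hfin : ∀ x : X, (φ ⁻¹' {x}).Finite)
    (F : C(X, ℝ))
    (AF : ℝ)
    (hAF : Tendsto
      (fun k : ℕ =>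
        sInf (Set.range fun x => ∑ j ∈ Finset.range k, F (φ^[j] x)) / k)
      atTop (nhds AF))
    (hpos : 0 < AF)
    (L : ℝ → (C(X, ℝ) →L[ℝ] C(X, ℝ)))
    (hL : ∀ (t : ℝ) (g : C(X, ℝ)) (x : X),
      L t g x = ∑' y : (φ ⁻¹' {x} : Set X), Real.exp (-t * F y) * g y) :
    Tendsto (fun t => (spectralRadius ℝ (L t)).toReal) atTop (nhds 0) := by
  classical
  -- fibers of iterates are finite
  have hfinI : ∀ (n : ℕ) (x : X), ((φ^[n]) ⁻¹' {x}).Finite := by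
    intro n
    induction n with
    | zero => intro x; simp
    | succ n ih =>
      intro x
      have h1 : (φ^[n+1]) ⁻¹' {x} = ⋃ y ∈ φ ⁻¹' {x}, (φ^[n]) ⁻¹' {y} := by
        ext z
        simp only [Set.mem_preimage, Set.mem_singleton_iff, Set.mem_iUnion,
          Function.iterate_succ_apply', exists_prop]
        exact ⟨fun h => ⟨φ^[n] z, h, rfl⟩, fun ⟨y, hy, hz⟩ => by rw [hz, hy]⟩
      rw [h1]
      exact (hfin x).biUnion (fun y _ => ih y)
  -- tsum over a fiber is a finite sum
  have hts : ∀ (f : X → ℝ) (x : X),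
      (∑' y : (φ ⁻¹' {x} : Set X), f y) = ∑ y ∈ (hfin x).toFinset, f y := by
    intro f x
    have h1 := (Equiv.setCongr ((hfin x).coe_toFinset)).tsum_eq
      (fun y : (φ ⁻¹' {x} : Set X) => f (y : X))
    rw [← h1]
    exact Finset.tsum_subtype' _ f
  -- the iterated operator formula
  have key : ∀ (t : ℝ) (n : ℕ) (g : C(X,ℝ)) (x : X),
      ((L t)^n) g x = ∑ z ∈ (hfinI n x).toFinset,
        Real.exp (-t * ∑ j ∈ Finset.range n, F (φ^[j] z)) * g z := by
    intro t n
    induction n with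
    | zero =>
      intro g x
      have h0 : (hfinI 0 x).toFinset = {x} := by
        ext z; simp [Set.Finite.mem_toFinset]
      simp [h0]
    | succ n ih =>
      intro g x
      have hLfin : ∀ (g : C(X,ℝ)) (x : X),
          L t g x = ∑ y ∈ (hfin x).toFinset, Real.exp (-t * F y) * g y := by
        intro g x
        rw [hL]
        exact hts (fun y => Real.exp (-t * F y) * g y) x
      rw [pow_succ', ContinuousLinearMap.mul_apply, hLfin]
      have hmaps : ∀ z ∈ (hfinI (n+1) x).toFinset, φ^[n] z ∈ (hfin x).toFinset := by
        intro z hz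
        simp only [Set.Finite.mem_toFinset, Set.mem_preimage, Set.mem_singleton_iff] at hz ⊢
        rw [← Function.iterate_succ_apply' φ n z]; exact hz
      rw [← Finset.sum_fiberwise_of_maps_to hmaps
        (fun z => Real.exp (-t * ∑ j ∈ Finset.range (n+1), F (φ^[j] z)) * g z)]
      refine Finset.sum_congr rfl (fun y hy => ?_)
      simp only [Set.Finite.mem_toFinset, Set.mem_preimage, Set.mem_singleton_iff] at hy
      have hfib : Finset.filter (fun z => φ^[n] z = y) (hfinI (n+1) x).toFinset
          = (hfinI n y).toFinset := by
        ext z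
        simp only [Finset.mem_filter, Set.Finite.mem_toFinset, Set.mem_preimage,
          Set.mem_singleton_iff, Function.iterate_succ_apply']
        constructor
        · rintro ⟨-, h⟩; exact h
        · intro h; exact ⟨by rw [h, hy], h⟩
      rw [hfib, ih, Finset.mul_sum]
      refine Finset.sum_congr rfl (fun z hz => ?_)
      simp only [Set.Finite.mem_toFinset, Set.mem_preimage, Set.mem_singleton_iff] at hz
      rw [Finset.sum_range_succ, hz, mul_add, Real.exp_add]
      ring
  -- Birkhoff sum basics
  set S : ℕ → X → ℝ := fun n x => ∑ j ∈ Finset.range n, F (φ^[j] x) with hSdef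
  have hScont : ∀ n, Continuous (S n) := fun n =>
    continuous_finset_sum _ fun j _ => F.continuous.comp (hcont.iterate j)
  have hbdd : ∀ n, BddBelow (Set.range (S n)) := by
    intro n
    obtain ⟨z, -, hz⟩ := isCompact_univ.exists_isMinOn Set.univ_nonempty
      (hScont n).continuousOn
    exact ⟨S n z, by rintro - ⟨x, rfl⟩; exact hz (Set.mem_univ x)⟩
  have hc : ∀ n x, sInf (Set.range (S n)) ≤ S n x := fun n x =>
    csInf_le (hbdd n) ⟨x, rfl⟩
  -- norm bound for iterates
  have habsnorm : ∀ g : C(X,ℝ), ‖|g|‖ = ‖g‖ := by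
    intro g
    refine le_antisymm ?_ ?_ <;>
      refine (ContinuousMap.norm_le _ (norm_nonneg _)).mpr (fun x => ?_)
    · simpa using ContinuousMap.norm_coe_le_norm g x
    · simpa using ContinuousMap.norm_coe_le_norm |g| x
  have normb : ∀ (n : ℕ) (t : ℝ), 0 ≤ t →
      ‖(L t)^n‖ ≤ Real.exp (-t * sInf (Set.range (S n))) * ‖(L 0)^n‖ := by
    intro n t ht
    set c := sInf (Set.range (S n)) with hcdef
    refine ContinuousLinearMap.opNorm_le_bound _ (by positivity) (fun g => ?_)
    refine (ContinuousMap.norm_le _ (by positivity)).mpr (fun x => ?_)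
    have h1 : |((L t)^n) g x| ≤ Real.exp (-t * c) * (((L 0)^n) |g| x) := by
      rw [key, key]
      calc |∑ z ∈ (hfinI n x).toFinset, Real.exp (-t * S n z) * g z|
          ≤ ∑ z ∈ (hfinI n x).toFinset, |Real.exp (-t * S n z) * g z| :=
            Finset.abs_sum_le_sum_abs _ _
        _ ≤ ∑ z ∈ (hfinI n x).toFinset, Real.exp (-t * c) * |g z| := by
            refine Finset.sum_le_sum (fun z hz => ?_)
            rw [abs_mul, abs_of_pos (Real.exp_pos _)]
            refine mul_le_mul_of_nonneg_right ?_ (abs_nonneg _)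
            exact Real.exp_le_exp.mpr (by nlinarith [hc n z])
        _ = Real.exp (-t * c) * ∑ z ∈ (hfinI n x).toFinset,
              Real.exp (-(0:ℝ) * S n z) * |g| z := by
            rw [Finset.mul_sum]
            refine Finset.sum_congr rfl (fun z hz => ?_)
            simp
    have h2 : ((L 0)^n) |g| x ≤ ‖(L 0)^n‖ * ‖g‖ := by
      calc ((L 0)^n) |g| x ≤ |((L 0)^n) |g| x| := le_abs_self _
        _ ≤ ‖((L 0)^n) |g|‖ := by
            simpa [Real.norm_eq_abs] using ContinuousMap.norm_coe_le_norm (((L 0)^n) |g|) x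
        _ ≤ ‖(L 0)^n‖ * ‖|g|‖ := ContinuousLinearMap.le_opNorm _ _
        _ = ‖(L 0)^n‖ * ‖g‖ := by rw [habsnorm]
    calc ‖((L t)^n) g x‖ = |((L t)^n) g x| := rfl
      _ ≤ Real.exp (-t * c) * (((L 0)^n) |g| x) := h1
      _ ≤ Real.exp (-t * c) * (‖(L 0)^n‖ * ‖g‖) := by
          refine mul_le_mul_of_nonneg_left h2 (Real.exp_pos _).le
      _ = Real.exp (-t * c) * ‖(L 0)^n‖ * ‖g‖ := by ring
  -- choose a good iterate
  have hev : ∀ᶠ k : ℕ in atTop, 0 < sInf (Set.range (S k)) / k :=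
    hAF.eventually (Ioi_mem_nhds hpos)
  obtain ⟨k, hk, hk1⟩ := (hev.and (eventually_ge_atTop 1)).exists
  obtain ⟨m, rfl⟩ : ∃ m, k = m + 1 := ⟨k - 1, by omega⟩
  set c := sInf (Set.range (S (m+1))) with hcdef
  have hkR : (0:ℝ) < (m+1 : ℕ) := by positivity
  have hcpos : 0 < c := by
    have := mul_pos hk hkR
    rwa [div_mul_cancel₀ _ (ne_of_gt hkR)] at this
  set C := ‖(L 0)^(m+1)‖ with hCdef
  have hCnn : 0 ≤ C := by rw [hCdef]; exact norm_nonneg ((L 0)^(m+1))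
  -- nontriviality for norm of 1
  haveI : Nontrivial C(X, ℝ) := ⟨1, 0, fun h => by
    have h2 := ContinuousMap.congr_fun h (Classical.arbitrary X)
    simp at h2⟩
  -- the squeezing bound
  have hub : ∀ t : ℝ, 0 ≤ t →
      (spectralRadius ℝ (L t)).toReal ≤ (Real.exp (-t * c) * C) ^ (1/((m:ℝ)+1)) := by
    intro t ht
    have hsr : spectralRadius ℝ (L t) ≤ (‖(L t)^(m+1)‖₊ : ENNReal) ^ (1/((m:ℝ)+1)) := by
      simpa using spectrum.spectralRadius_le_pow_nnnorm_pow_one_div ℝ (L t) m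
    have hne : (‖(L t)^(m+1)‖₊ : ENNReal) ^ (1/((m:ℝ)+1)) ≠ ⊤ :=
      ENNReal.rpow_ne_top_of_nonneg (by positivity) ENNReal.coe_ne_top
    have h1 : (spectralRadius ℝ (L t)).toReal ≤ ‖(L t)^(m+1)‖ ^ (1/((m:ℝ)+1)) := by
      have := ENNReal.toReal_mono hne hsr
      rwa [← ENNReal.toReal_rpow, ENNReal.coe_toReal, coe_nnnorm] at this
    refine h1.trans ?_
    refine Real.rpow_le_rpow (norm_nonneg ((L t)^(m+1))) ?_ (by positivity)
    exact normb (m+1) t ht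
  -- the upper function tends to 0
  have hG : Tendsto (fun t : ℝ => (Real.exp (-t * c) * C) ^ (1/((m:ℝ)+1)))
      atTop (nhds 0) := by
    have h1 : Tendsto (fun t : ℝ => -t * c) atTop atBot := by
      have h := (tendsto_id (α := ℝ)).atTop_mul_const hcpos
      simp only [neg_mul]
      exact tendsto_neg_atTop_atBot.comp h
    have h2 : Tendsto (fun t : ℝ => Real.exp (-t * c) * C) atTop (nhds 0) := by
      simpa using (Real.tendsto_exp_atBot.comp h1).mul_const C
    have h3 := (Real.continuousAt_rpow_const 0 (1/((m:ℝ)+1))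
      (Or.inr (by positivity))).tendsto.comp h2
    have h4 : (0:ℝ) ^ (1/((m:ℝ)+1)) = 0 := Real.zero_rpow (by positivity)
    rw [h4] at h3
    exact h3
  refine squeeze_zero' (Eventually.of_forall (fun t => ENNReal.toReal_nonneg)) ?_ hG
  filter_upwards [eventually_ge_atTop (0:ℝ)] with t ht
  exact hub t ht
end

section
/- Let X be a compact metric space, φ : X → X continuous surjective locally injective, {b_i}_{i=1}^k a partition of unity in C(X) with φ injective on supp b_i for each i, and m(x) = #φ^{-1}(φ(x)). Then for every f in the C*-algebra D (a unital commutative C*-algebra of bounded functions containing C(X), m, and closed under α(g)=g∘φ and the transfer operator 𝓛), one has f = ∑_{i=1}^k (b_i m)^{1/2} · α(𝓛((b_i m)^{1/2} f)); i.e. {(b_i m)^{1/2}} is a quasi-basis for the conditional expectation α∘𝓛 of D onto α(D). -/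
/-- Quasi-basis identity: with a partition of unity `{b_i}` such that `φ` is injective on
each `supp b_i`, and `m(x) = #φ⁻¹(φ(x))`, every `f ∈ D` satisfies
`f = ∑_i (b_i m)^{1/2} · α(𝓛((b_i m)^{1/2} f))` pointwise, where `α(g) = g ∘ φ` and
`𝓛` is the transfer operator. -/
theorem quasi_basis_identity {X : Type*} [MetricSpace X] [CompactSpace X]
    (φ : X → X) (hcont : Continuous φ) (hsurj : Function.Surjective φ)
    (hlocinj : ∀ x : X, ∃ U ∈ nhds x, Set.InjOn φ U)
    (hfin : ∀ x : X, (φ ⁻¹' {x}).Finite)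
    (k : ℕ) (b : Fin k → C(X, ℝ))
    (hb0 : ∀ i, ∀ x, 0 ≤ b i x)
    (hb1 : ∀ x, ∑ i, b i x = 1)
    (hbinj : ∀ i, Set.InjOn φ (tsupport (b i)))
    (N : X → ℝ) (hN : ∀ x, N x = (Nat.card (φ ⁻¹' {x}) : ℝ))
    (m : X → ℝ) (hm : ∀ x, m x = N (φ x))
    (𝓛 : (X → ℝ) → (X → ℝ))
    (h𝓛 : ∀ (f : X → ℝ) (x : X),
      𝓛 f x = (N x)⁻¹ * ∑' z : (φ ⁻¹' {x} : Set X), f z)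
    (D : Subalgebra ℝ (X → ℝ)) (hC : ∀ g : C(X, ℝ), ⇑g ∈ D)
    (f : X → ℝ) (hf : f ∈ D) :
    ∀ x : X, f x =
      ∑ i, Real.sqrt (b i x * m x) *
        (𝓛 (fun y => Real.sqrt (b i y * m y) * f y)) (φ x) := by
  intro x
  haveI : Fintype (φ ⁻¹' {φ x} : Set X) := (hfin (φ x)).fintype
  have hxS : x ∈ (φ ⁻¹' {φ x} : Set X) := rfl
  have hNpos : 0 < N (φ x) := by
    rw [hN]
    have hne : Nat.card (φ ⁻¹' {φ x} : Set X) ≠ 0 := by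
      haveI : Finite (φ ⁻¹' {φ x} : Set X) := (hfin (φ x)).to_subtype
      exact Nat.card_ne_zero.mpr ⟨⟨⟨x, rfl⟩⟩, inferInstance⟩
    exact_mod_cast Nat.pos_of_ne_zero hne
  have hmx : m x = N (φ x) := hm x
  have key : ∀ i : Fin k,
      Real.sqrt (b i x * m x) *
        (𝓛 (fun y => Real.sqrt (b i y * m y) * f y)) (φ x)
      = b i x * ((N (φ x))⁻¹ * (m x * f x)) := by
    intro i
    have hnn : 0 ≤ b i x * m x := mul_nonneg (hb0 i x) (hmx ▸ hNpos.le)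
    have hsum : Real.sqrt (b i x * m x) * ∑ z : (φ ⁻¹' {φ x} : Set X),
        Real.sqrt (b i (z : X) * m (z : X)) * f (z : X)
        = b i x * (m x * f x) := by
      rw [Finset.mul_sum, Finset.sum_eq_single (⟨x, hxS⟩ : (φ ⁻¹' {φ x} : Set X))]
      · rw [← mul_assoc, Real.mul_self_sqrt hnn, mul_assoc]
      · intro z _ hz
        by_cases hbx : b i x = 0
        · rw [hbx, zero_mul, Real.sqrt_zero, zero_mul]
        by_cases hbz : b i (z : X) = 0
        · rw [hbz, zero_mul, Real.sqrt_zero, zero_mul, mul_zero]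
        exfalso
        apply hz
        have hzx : (z : X) = x := by
          apply hbinj i
          · exact subset_tsupport _ hbz
          · exact subset_tsupport _ hbx
          · exact z.2
        exact Subtype.ext hzx
      · intro h; exact absurd (Finset.mem_univ _) h
    rw [h𝓛, tsum_fintype, mul_left_comm, hsum]
    ring
  rw [Finset.sum_congr rfl (fun i _ => key i), ← Finset.sum_mul, hb1, one_mul,
    hmx, inv_mul_cancel_left₀ hNpos.ne']
end

section
/- Let X be a compact metric space, φ : X → X continuous surjective locally injective, D the canonical commutative C*-algebra of the semi-étale groupoid with spectrum \widehat{D}, ι : X → \widehat{D} the evaluation embedding and ψ : \widehat{D} → \widehat{D} the induced map ψ(c)(g) = c(g∘φ). Then ψ^{-1}(ι(X)) = ι(X); more precisely, for each x ∈ X, ψ^{-1}(ι(x)) = {ι(z) : z ∈ φ^{-1}(x)}. -/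
open Filter

/-- Let `D` be the canonical commutative C*-algebra of bounded functions associated with a
locally injective surjection `φ` (it contains `C(X)`, is uniformly closed, and is closed
under `g ↦ g ∘ φ` and the fiber-sum operation).  For the induced map `ψ(c)(g) = c(g ∘ φ)`
on characters and the evaluation embedding `ι`, one has `ψ⁻¹(ι(X)) = ι(X)`; more
precisely `ψ⁻¹(ι x) = {ι z : z ∈ φ⁻¹(x)}` for each `x`. -/
theorem preimage_of_evaluation_characters {X : Type*} [MetricSpace X] [CompactSpace X]
    (φ : X → X) (hcont : Continuous φ) (hsurj : Function.Surjective φ)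
    (hlocinj : ∀ x : X, ∃ U ∈ nhds x, Set.InjOn φ U)
    (hfin : ∀ x : X, (φ ⁻¹' {x}).Finite)
    (D : StarSubalgebra ℂ (X → ℂ))
    (hbdd : ∀ g ∈ D, ∃ M : ℝ, ∀ x, ‖g x‖ ≤ M)
    (hC : ∀ f : C(X, ℂ), ⇑f ∈ D)
    (hcomp : ∀ g ∈ D, g ∘ φ ∈ D)
    (hsum : ∀ g ∈ D, (fun x => ∑' z : (φ ⁻¹' {x} : Set X), g z) ∈ D)
    (hclosed : ∀ (g : ℕ → X → ℂ) (h : X → ℂ), (∀ n, g n ∈ D) →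
      TendstoUniformly g h atTop → h ∈ D)
    (ι : X → (D →⋆ₐ[ℂ] ℂ))
    (hι : ∀ (x : X) (g : X → ℂ) (hg : g ∈ D), ι x ⟨g, hg⟩ = g x)
    (ψ : (D →⋆ₐ[ℂ] ℂ) → (D →⋆ₐ[ℂ] ℂ))
    (hψ : ∀ (c : D →⋆ₐ[ℂ] ℂ) (g : X → ℂ) (hg : g ∈ D),
      ψ c ⟨g, hg⟩ = c ⟨g ∘ φ, hcomp g hg⟩) :
    (∀ x : X, ψ ⁻¹' {ι x} = ι '' (φ ⁻¹' {x})) ∧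
    ψ ⁻¹' (Set.range ι) = Set.range ι := by
  classical
  -- the inclusion of C(X) into D as a star algebra hom
  let j : C(X, ℂ) →⋆ₐ[ℂ] D :=
    { toFun := fun f => ⟨⇑f, hC f⟩
      map_one' := rfl
      map_mul' := fun f g => rfl
      map_zero' := rfl
      map_add' := fun f g => rfl
      commutes' := fun r => rfl
      map_star' := fun f => rfl }
  -- forward direction: ψ (ι z) = ι (φ z)
  have fwd : ∀ z : X, ψ (ι z) = ι (φ z) := by
    intro z
    apply DFunLike.ext
    rintro ⟨g, hg⟩
    rw [hψ (ι z) g hg, hι z (g ∘ φ) (hcomp g hg), hι (φ z) g hg]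
    rfl
  -- key: any character mapped by ψ to ι x is evaluation at a point of the fiber
  have key : ∀ (x : X) (c : D →⋆ₐ[ℂ] ℂ), ψ c = ι x → ∃ z, φ z = x ∧ c = ι z := by
    intro x c hcx
    set χ : C(X, ℂ) →⋆ₐ[ℂ] ℂ := c.comp j with hχ
    have hχ_apply : ∀ f : C(X, ℂ), χ f = c ⟨⇑f, hC f⟩ := fun f => rfl
    -- Step 1: find a common evaluation point z₀ for χ
    set Z : C(X, ℂ) → Set X := fun f => {y | f y = χ f} with hZ
    have hZclosed : ∀ f, IsClosed (Z f) :=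
      fun f => isClosed_eq (map_continuous f) continuous_const
    have hne : (Set.univ ∩ ⋂ f, Z f).Nonempty := by
      by_contra hcon
      rw [Set.not_nonempty_iff_eq_empty] at hcon
      obtain ⟨t, ht⟩ := isCompact_univ.elim_finite_subfamily_closed Z hZclosed hcon
      set F : C(X, ℂ) → C(X, ℂ) := fun f => f - χ f • 1 with hF
      set h : C(X, ℂ) := ∑ f ∈ t, star (F f) * F f with hh
      have hχF : ∀ f, χ (F f) = 0 := by
        intro f
        simp [hF, map_sub, map_smul, map_one, smul_eq_mul]
      have hχh : χ h = 0 := by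
        rw [hh, map_sum]
        refine Finset.sum_eq_zero fun f _ => ?_
        rw [map_mul, hχF, mul_zero]
      -- h never vanishes
      have hhy : ∀ y : X, h y ≠ 0 := by
        intro y
        have hy : y ∉ ⋂ f ∈ t, Z f := by
          intro hy
          have : y ∈ Set.univ ∩ ⋂ f ∈ t, Z f := ⟨trivial, hy⟩
          rw [ht] at this
          exact this
        simp only [Set.mem_iInter, not_forall] at hy
        obtain ⟨f₁, hf₁t, hf₁⟩ := hy
        have hf₁' : f₁ y - χ f₁ ≠ 0 := sub_ne_zero.mpr hf₁
        have hval : h y = ((∑ f ∈ t, Complex.normSq (F f y) : ℝ) : ℂ) := by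
          rw [hh]
          push_cast
          rw [ContinuousMap.sum_apply]
          refine Finset.sum_congr rfl fun f _ => ?_
          rw [ContinuousMap.mul_apply, ContinuousMap.star_apply, Complex.star_def,
            Complex.normSq_eq_conj_mul_self]
        rw [hval]
        rw [Complex.ofReal_ne_zero]
        have hpos : 0 < ∑ f ∈ t, Complex.normSq (F f y) := by
          refine Finset.sum_pos' (fun f _ => Complex.normSq_nonneg _) ⟨f₁, hf₁t, ?_⟩
          have : F f₁ y = f₁ y - χ f₁ := by
            simp [hF, smul_eq_mul]
          rw [this]
          exact Complex.normSq_pos.mpr hf₁'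
        exact ne_of_gt hpos
      -- so h is invertible in C(X) ⊆ D
      set G : C(X, ℂ) := ⟨fun y => (h y)⁻¹, (map_continuous h).inv₀ hhy⟩ with hG
      have hmul : h * G = 1 := by
        ext y
        simp [hG, mul_inv_cancel₀ (hhy y)]
      have : (1 : ℂ) = 0 := by
        calc (1 : ℂ) = χ (h * G) := by rw [hmul, map_one]
        _ = χ h * χ G := map_mul χ h G
        _ = 0 := by rw [hχh, zero_mul]
      exact one_ne_zero this
    obtain ⟨z₀, -, hz₀⟩ := hne
    have heval : ∀ f : C(X, ℂ), χ f = f z₀ := by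
      intro f
      have := Set.mem_iInter.mp hz₀ f
      exact this.symm
    -- Step 2: φ z₀ = x
    have hφz₀ : φ z₀ = x := by
      have hev : ∀ f : C(X, ℂ), f (φ z₀) = f x := by
        intro f
        have h1 : ι x ⟨⇑f, hC f⟩ = f x := hι x (⇑f) (hC f)
        have h2 : ψ c ⟨⇑f, hC f⟩ = c ⟨⇑f ∘ φ, hcomp (⇑f) (hC f)⟩ := hψ c (⇑f) (hC f)
        have h3 : c ⟨⇑f ∘ φ, hcomp (⇑f) (hC f)⟩ = f (φ z₀) := by
          have : c ⟨⇑f ∘ φ, hcomp (⇑f) (hC f)⟩ = χ (f.comp ⟨φ, hcont⟩) := rfl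
          rw [this, heval]
          rfl
        rw [← h3, ← h2, hcx, h1]
      have := hev ⟨fun y => ((dist y x : ℝ) : ℂ), by fun_prop⟩
      simp only [ContinuousMap.coe_mk] at this
      rw [dist_self, Complex.ofReal_zero, Complex.ofReal_eq_zero, dist_eq_zero] at this
      exact this
    -- Step 3: bump function supported in an injectivity neighborhood of z₀
    obtain ⟨V, hV, hVinj⟩ := hlocinj z₀
    obtain ⟨r, hr, hball⟩ := Metric.mem_nhds_iff.mp hV
    have hinj : Set.InjOn φ (Metric.ball z₀ r) := hVinj.mono hball
    set f₀ : C(X, ℂ) := ⟨fun y => ((max (1 - dist y z₀ / r) 0 : ℝ) : ℂ), by fun_prop⟩ with hf₀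
    have hf₀z₀ : f₀ z₀ = 1 := by
      simp [hf₀]
    have hf₀supp : ∀ y, f₀ y ≠ 0 → y ∈ Metric.ball z₀ r := by
      intro y hy
      by_contra hyb
      rw [Metric.mem_ball, not_lt] at hyb
      apply hy
      simp only [hf₀, ContinuousMap.coe_mk, Complex.ofReal_eq_zero]
      rw [max_eq_right]
      have : (1 : ℝ) ≤ dist y z₀ / r := (one_le_div hr).mpr hyb
      linarith
    -- prove c = ι z₀
    have hcz : c = ι z₀ := by
      apply DFunLike.ext
      rintro ⟨g, hg⟩
      rw [hι z₀ g hg]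
      -- the localized function and its fiber sum
      have hgf : (fun y => g y * f₀ y) ∈ D := mul_mem hg (hC f₀)
      set L : X → ℂ := fun x' => ∑' z : (φ ⁻¹' {x'} : Set X), (g z * f₀ z) with hL
      have hLD : L ∈ D := hsum _ hgf
      -- pointwise identity: f₀ · (L ∘ φ) = f₀ · (g · f₀)
      have hptwise : ∀ y, f₀ y * L (φ y) = f₀ y * (g y * f₀ y) := by
        intro y
        by_cases hy : f₀ y = 0
        · rw [hy, zero_mul, zero_mul]
        · have hyB : y ∈ Metric.ball z₀ r := hf₀supp y hy
          have : L (φ y) = g y * f₀ y := by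
            rw [hL]
            have := tsum_eq_single (L := SummationFilter.unconditional _) (f := fun z : (φ ⁻¹' {φ y} : Set X) => g z * f₀ z)
              (⟨y, rfl⟩ : (φ ⁻¹' {φ y} : Set X)) ?_
            · exact this
            · rintro ⟨z, hz⟩ hzne
              by_contra hne0
              have hfz : f₀ z ≠ 0 := fun h0 => hne0 (by simp [h0])
              have hzB : z ∈ Metric.ball z₀ r := hf₀supp z hfz
              have : z = y := hinj hzB hyB hz
              exact hzne (Subtype.ext this)
          rw [this]
      -- the identity in D
      have hD_eq : (j f₀) * (⟨L ∘ φ, hcomp L hLD⟩ : D) = (j f₀) * (⟨g, hg⟩ * j f₀) := by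
        apply Subtype.ext
        funext y
        exact hptwise y
      -- apply c
      have happ := congrArg c hD_eq
      rw [map_mul, map_mul, map_mul] at happ
      have hcf₀ : c (j f₀) = 1 := by
        have h := heval f₀
        rw [hf₀z₀] at h
        exact h
      rw [hcf₀, one_mul, one_mul] at happ
      -- compute c ⟨L ∘ φ, _⟩ via ψ
      have hLφ : c (⟨L ∘ φ, hcomp L hLD⟩ : D) = g z₀ := by
        have h1 : ψ c ⟨L, hLD⟩ = c ⟨L ∘ φ, hcomp L hLD⟩ := hψ c L hLD
        rw [hcx] at h1
        rw [← h1, hι x L hLD]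
        simp only [hL]
        have hz₀fib : z₀ ∈ (φ ⁻¹' {x} : Set X) := hφz₀
        have := tsum_eq_single (L := SummationFilter.unconditional _) (f := fun z : (φ ⁻¹' {x} : Set X) => g z * f₀ z)
          (⟨z₀, hz₀fib⟩ : (φ ⁻¹' {x} : Set X)) ?_
        · rw [this]
          simp [hf₀z₀]
        · rintro ⟨z, hz⟩ hzne
          by_contra hne0
          have hfz : f₀ z ≠ 0 := fun h0 => hne0 (by simp [h0])
          have hzB : z ∈ Metric.ball z₀ r := hf₀supp z hfz
          have hz₀B : z₀ ∈ Metric.ball z₀ r := Metric.mem_ball_self hr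
          have : z = z₀ := hinj hzB hz₀B (by rw [Set.mem_preimage, Set.mem_singleton_iff] at hz; rw [hz, hφz₀])
          exact hzne (Subtype.ext this)
      rw [hLφ, mul_one] at happ
      exact happ.symm
    exact ⟨z₀, hφz₀, hcz⟩
  constructor
  · intro x
    ext c
    constructor
    · intro hc
      have hcx : ψ c = ι x := hc
      obtain ⟨z, hz, hcz⟩ := key x c hcx
      exact ⟨z, hz, hcz.symm⟩
    · rintro ⟨z, hz, rfl⟩
      have : ψ (ι z) = ι (φ z) := fwd z
      rw [Set.mem_preimage, Set.mem_singleton_iff, this]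
      rw [Set.mem_preimage, Set.mem_singleton_iff] at hz
      rw [hz]
  · ext c
    constructor
    · rintro ⟨x, hx⟩
      obtain ⟨z, hz, hcz⟩ := key x c hx.symm
      exact ⟨z, hcz.symm⟩
    · rintro ⟨z, rfl⟩
      exact ⟨φ z, (fwd z).symm⟩
end
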